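/- Let P be a simple n-dimensional convex polytope with m facets, different from the n-simplex, and let vc(P,v) be the vertex cut of P at a vertex v. Then the number of quadratic minimal generators of the Stanley-Reisner ideal satisfies β^{-1,4}(vc(P,v)) = β^{-1,4}(P) + m - n. -/
import Mathlib


open Finset

open scoped Classical

noncomputable section

/-- The nerve of the vertex cut `vc(P, v)`, where the simple `n`-polytope `P` has
facets indexed by `Fin m` with nerve `K` (`K S` ↔ the facets in `S` have nonempty
intersection), and `A` is the set of the `n` facets through the cut vertex `v`.
The new simplex facet is indexed by `none`; it meets exactly the facets through `v`
(and any proper subfamily of them), while the facets through `v` now have empty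
common intersection. -/
def vcNerve {m : ℕ} (K : Finset (Fin m) → Prop) (A : Finset (Fin m)) :
    Finset (Option (Fin m)) → Prop :=
  fun S =>
    if none ∈ S then S.eraseNone ⊂ A
    else K S.eraseNone ∧ S.eraseNone ≠ A

/-- The number of quadratic minimal generators `β^{-1,4}` of the Stanley–Reisner ideal
of a simple polytope with nerve `K`: the number of pairs of facets with empty
intersection. -/
def numDisjointPairs {V : Type*} [Fintype V] (K : Finset V → Prop) : ℕ :=
  (((Finset.univ : Finset V).powersetCard 2).filter (fun S => ¬ K S)).card

/-- Let `P` be a simple `n`-dimensional convex polytope (`3 ≤ n`) with `m` facets,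
different from the `n`-simplex (so `m ≥ n + 2`), with nerve `K` (downward closed,
with all `n + 1`-fold intersections empty by simplicity) and let `A` (a face of `K`
of cardinality `n`) be the set of facets through a vertex `v`.  Then the number of
quadratic minimal generators of the Stanley–Reisner ideal satisfies
`β^{-1,4}(vc(P, v)) = β^{-1,4}(P) + m - n`. -/
theorem betti_one_four_of_vertex_cut (n m : ℕ) (hn : 3 ≤ n) (hm : n + 2 ≤ m)
    (K : Finset (Fin m) → Prop) (A : Finset (Fin m))
    (hdc : ∀ S T : Finset (Fin m), T ⊆ S → K S → K T)
    (hsimple : ∀ S : Finset (Fin m), n < S.card → ¬ K S)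
    (hAcard : A.card = n) (hA : K A) :
    numDisjointPairs (vcNerve K A) = numDisjointPairs K + (m - n) := by
  classical
  set S1 := ((((univ : Finset (Fin m)).powersetCard 2).filter (fun S => ¬ K S)).image
      (fun S => S.image some)) with hS1
  set S2 := ((univ.filter (fun i => i ∉ A)).image
      (fun i => ({none, some i} : Finset (Option (Fin m))))) with hS2
  have hA2 : ∀ T : Finset (Fin m), T.card = 2 → T ≠ A := by
    intro T hT h
    rw [h] at hT; omega
  have key : (((univ : Finset (Option (Fin m))).powersetCard 2).filter
      (fun S => ¬ vcNerve K A S)) = S1 ∪ S2 := by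
    ext S
    simp only [mem_filter, mem_powersetCard, mem_union, hS1, hS2, mem_image, mem_filter,
      mem_univ, true_and, subset_univ]
    constructor
    · rintro ⟨hcard, hne⟩
      by_cases hnone : none ∈ S
      · right
        rw [vcNerve, if_pos hnone] at hne
        -- S = {none, some i}
        have hca : (S.erase none).card = 1 := by
          rw [card_erase_of_mem hnone, hcard]
        obtain ⟨x, hx⟩ := card_eq_one.mp hca
        have hxmem : x ∈ S.erase none := by rw [hx]; exact mem_singleton_self x
        have hxne : x ≠ none := (mem_erase.mp hxmem).1
        obtain ⟨i, rfl⟩ := Option.ne_none_iff_exists'.mp hxne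
        have hSeq : S = {none, some i} := by
          rw [← insert_erase hnone, hx]
        refine ⟨i, ?_, hSeq.symm⟩
        intro hiA
        apply hne
        have hEN : S.eraseNone = {i} := by
          ext j; simp [mem_eraseNone, hSeq]
        rw [hEN]
        constructor
        · simpa using hiA
        · intro hAs
          have := card_le_card hAs
          simp [hAcard] at this; omega
      · left
        rw [vcNerve, if_neg hnone] at hne
        have himg : (S.eraseNone).image some = S := by
          rw [image_some_eraseNone, erase_eq_of_notMem hnone]
        have hce : (S.eraseNone).card = 2 := by
          calc (S.eraseNone).card = ((S.eraseNone).image some).card :=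
                (card_image_of_injective _ (Option.some_injective _)).symm
            _ = S.card := by rw [himg]
            _ = 2 := hcard
        refine ⟨S.eraseNone, ⟨hce, ?_⟩, himg⟩
        intro hK
        exact hne ⟨hK, hA2 _ hce⟩
    · rintro (⟨T, ⟨hTc, hTK⟩, rfl⟩ | ⟨i, hiA, rfl⟩)
      · have hnone : none ∉ T.image some := by simp
        refine ⟨?_, ?_⟩
        · rw [card_image_of_injective _ (Option.some_injective _), hTc]
        · rw [vcNerve, if_neg hnone, eraseNone_image_some]
          rintro ⟨hK, -⟩; exact hTK hK
      · have hnone : none ∈ ({none, some i} : Finset (Option (Fin m))) := by simp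
        refine ⟨?_, ?_⟩
        · rw [card_insert_of_notMem (by simp), card_singleton]
        · rw [vcNerve, if_pos hnone]
          intro hsub
          apply hiA
          have hEN : ({none, some i} : Finset (Option (Fin m))).eraseNone = {i} := by
            ext j; simp [mem_eraseNone]
          rw [hEN] at hsub
          simpa using hsub.1 (mem_singleton_self i)
  have hdisj : Disjoint S1 S2 := by
    rw [disjoint_left]
    rintro S hS1' hS2'
    simp only [hS1, hS2, mem_image, mem_filter, mem_univ, true_and] at hS1' hS2'
    obtain ⟨T, -, rfl⟩ := hS1'
    obtain ⟨i, -, heq⟩ := hS2'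
    have : none ∈ T.image some := by rw [← heq]; simp
    simp at this
  have hc1 : S1.card = numDisjointPairs K := by
    rw [hS1, card_image_of_injective _ (Finset.image_injective (Option.some_injective _))]
    rfl
  have hc2 : S2.card = m - n := by
    rw [hS2, card_image_of_injective _ ?inj]
    · have : (univ.filter (fun i => i ∉ A)) = Aᶜ := by ext i; simp
      rw [this, card_compl, hAcard, Fintype.card_fin]
    case inj =>
      intro i j h
      simp only at h
      have : some i ∈ ({none, some j} : Finset (Option (Fin m))) := by
        rw [← h]; simp
      simpa using this
  rw [numDisjointPairs, key, card_union_of_disjoint hdisj, hc1, hc2]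


end
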